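/- Fix p ∈ (0,1). On the interval (m(p), c(p)], the functions w ↦ φ(w) and w ↦ λ(w) are weakly decreasing, and the function w ↦ (1 − λ(w))/(w − m(p)) is weakly decreasing. -/

import Mathlib

set_option maxHeartbeats 1000000

lemma chord_ineq_aux {m : ℝ → ℝ} (hconv : ConvexOn ℝ (Set.Icc (0 : ℝ) 1) m)
    {x y z : ℝ} (hx : 0 ≤ x) (hxz : x ≤ z) (hzy : z ≤ y) (hy : y ≤ 1) :
    (y - x) * m z ≤ (y - z) * m x + (z - x) * m y := by
  rcases eq_or_lt_of_le (hxz.trans hzy) with h | h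
  · have h1 : z = x := le_antisymm (by rw [h]; exact hzy) hxz
    subst h1
    subst h
    norm_num
  · have hyx : 0 < y - x := sub_pos.2 h
    have key := hconv.2 (Set.mem_Icc.2 ⟨hx, hxz.trans (hzy.trans hy)⟩)
        (Set.mem_Icc.2 ⟨hx.trans (hxz.trans hzy), hy⟩)
        (div_nonneg (by linarith : (0:ℝ) ≤ y - z) hyx.le)
        (div_nonneg (by linarith : (0:ℝ) ≤ z - x) hyx.le)
        (by field_simp; ring)
    simp only [smul_eq_mul] at key
    have hc : (y - z) / (y - x) * x + (z - x) / (y - x) * y = z := by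
      field_simp
      ring
    rw [hc] at key
    have h2 := mul_le_mul_of_nonneg_left key hyx.le
    calc (y - x) * m z ≤ (y - x) * ((y - z) / (y - x) * m x + (z - x) / (y - x) * m y) := h2
      _ = (y - z) * m x + (z - x) * m y := by field_simp

/-- monotonicity of the splitting.  Fix `p ∈ (0,1)` and let
`(λ(w), φ(w))` be the unique splitting of `p` into `φ(w)` and `1` delivering utility
`w ∈ (m(p), c(p)]`, where `c` is the chord of `m` from `(0, m(0))` to `(1, m(1))`.
Then `φ`, `λ`, and `w ↦ (1 − λ(w))/(w − m(p))` are weakly decreasing in `w`. -/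
theorem splitting_monotone_in_w
    (m : ℝ → ℝ) (hconv : ConvexOn ℝ (Set.Icc (0 : ℝ) 1) m)
    (hcont : ContinuousOn m (Set.Icc (0 : ℝ) 1))
    (p : ℝ) (hp : p ∈ Set.Ioo (0 : ℝ) 1)
    (lam phi : ℝ → ℝ)
    (hsplit : ∀ w : ℝ, m p < w → w ≤ (1 - p) * m 0 + p * m 1 →
      0 < lam w ∧ lam w ≤ 1 ∧ 0 ≤ phi w ∧ phi w ≤ p ∧
      lam w * phi w + (1 - lam w) * 1 = p ∧
      lam w * m (phi w) + (1 - lam w) * m 1 = w) :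
    ∀ w₁ w₂ : ℝ, m p < w₁ → w₁ ≤ w₂ → w₂ ≤ (1 - p) * m 0 + p * m 1 →
      phi w₂ ≤ phi w₁ ∧ lam w₂ ≤ lam w₁ ∧
      (1 - lam w₂) / (w₂ - m p) ≤ (1 - lam w₁) / (w₁ - m p) := by
  intro w₁ w₂ hw1 h12 hw2
  obtain ⟨hp0, hp1⟩ := hp
  have hw1' : w₁ ≤ (1 - p) * m 0 + p * m 1 := h12.trans hw2
  have hw2' : m p < w₂ := lt_of_lt_of_le hw1 h12
  obtain ⟨hl1pos, hl1le, hph1nn, hph1le, he11, he12⟩ := hsplit w₁ hw1 hw1'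
  obtain ⟨hl2pos, hl2le, hph2nn, hph2le, he21, he22⟩ := hsplit w₂ hw2' hw2
  set a := phi w₁ with ha_def
  set b := phi w₂ with hb_def
  set l1 := lam w₁ with hl1_def
  set l2 := lam w₂ with hl2_def
  have E1 : l1 * (1 - a) = 1 - p := by linear_combination -he11
  have E2 : l2 * (1 - b) = 1 - p := by linear_combination -he21
  have ha1 : a < 1 := by nlinarith
  have hb1 : b < 1 := by nlinarith
  -- b < p (else w₂ = m p)
  have hbp : b < p := by
    rcases lt_or_eq_of_le hph2le with h | h
    · exact h
    · exfalso
      have hl2one : l2 = 1 := by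
        have h' : l2 * (1 - p) = 1 - p := by rw [← h]; rw [← h] at E2; exact E2
        have : (l2 - 1) * (1 - p) = 0 := by linarith [h']
        rcases mul_eq_zero.1 this with h'' | h''
        · linarith
        · linarith
      have : m b = w₂ := by
        have := he22; rw [hl2one] at this; linarith [this]
      rw [h] at this; linarith
  have hap : a < p := by
    rcases lt_or_eq_of_le hph1le with h | h
    · exact h
    · exfalso
      have hl1one : l1 = 1 := by
        have h' : l1 * (1 - p) = 1 - p := by rw [← h]; rw [← h] at E1; exact E1
        have : (l1 - 1) * (1 - p) = 0 := by linarith [h']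
        rcases mul_eq_zero.1 this with h'' | h''
        · linarith
        · linarith
      have : m a = w₁ := by
        have := he12; rw [hl1one] at this; linarith [this]
      rw [h] at this; linarith
  -- the chord-value equations with l eliminated
  have W1 : w₁ * (1 - a) = (1 - p) * m a + (p - a) * m 1 := by
    linear_combination (a - 1) * he12 + (m a - m 1) * E1
  have W2 : w₂ * (1 - b) = (1 - p) * m b + (p - b) * m 1 := by
    linear_combination (b - 1) * he22 + (m b - m 1) * E2
  -- Part 1: phi is antitone
  have hba : b ≤ a := by
    by_contra hab'
    push_neg at hab'
    have H1 := chord_ineq_aux hconv hph1nn hab'.le hbp.le hp1.le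
    have H1s : (1 - p) * ((p - a) * m b) ≤ (1 - p) * ((p - b) * m a + (b - a) * m p) :=
      mul_le_mul_of_nonneg_left H1 (by linarith)
    have S1 : w₁ * ((1 - b) * (p - a)) ≤ w₂ * ((1 - b) * (p - a)) :=
      mul_le_mul_of_nonneg_right h12 (by nlinarith)
    have W2s : w₂ * ((1 - b) * (p - a)) = (p - a) * ((1 - p) * m b + (p - b) * m 1) := by
      linear_combination (p - a) * W2
    have W1s : w₁ * ((1 - a) * (p - b)) = (p - b) * ((1 - p) * m a + (p - a) * m 1) := by
      linear_combination (p - b) * W1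
    have Hmps : ((1 - p) * (b - a)) * m p < ((1 - p) * (b - a)) * w₁ :=
      mul_lt_mul_of_pos_left hw1 (by nlinarith)
    linarith [H1s, S1, W2s, W1s, Hmps]
  -- Part 2: lam is antitone
  have hll : l2 ≤ l1 := by
    have h1 : l2 * (1 - a) ≤ l2 * (1 - b) :=
      mul_le_mul_of_nonneg_left (by linarith) hl2pos.le
    have h2 : l2 * (1 - a) ≤ l1 * (1 - a) := by linarith [E1, E2]
    have h3 : (0:ℝ) < 1 - a := by linarith
    nlinarith [h2, h3]
  refine ⟨hba, hll, ?_⟩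
  -- Part 3
  have hd1 : (0:ℝ) < w₁ - m p := by linarith
  have hd2 : (0:ℝ) < w₂ - m p := by linarith
  rw [div_le_div_iff₀ hd2 hd1]
  have F1 : (1 - l1) * (1 - a) = p - a := by linear_combination -E1
  have F2 : (1 - l2) * (1 - b) = p - b := by linear_combination -E2
  have Hs := chord_ineq_aux hconv hph2nn hba hap.le hp1.le
  have Hss : (1 - p) * ((p - b) * m a) ≤ (1 - p) * ((p - a) * m b + (a - b) * m p) :=
    mul_le_mul_of_nonneg_left Hs (by linarith)
  have W1s : (p - b) * ((1 - a) * w₁) = (p - b) * ((1 - p) * m a + (p - a) * m 1) := by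
    linear_combination (p - b) * W1
  have W2s : (p - a) * ((1 - b) * w₂) = (p - a) * ((1 - p) * m b + (p - b) * m 1) := by
    linear_combination (p - a) * W2
  have P : (p - b) * ((1 - a) * (w₁ - m p)) ≤ (p - a) * ((1 - b) * (w₂ - m p)) := by
    linarith [Hss, W1s, W2s]
  have hpos : (0:ℝ) < (1 - a) * (1 - b) := by nlinarith
  have e1 : (1 - l2) * (w₁ - m p) * ((1 - a) * (1 - b)) = (p - b) * ((1 - a) * (w₁ - m p)) := by
    linear_combination ((w₁ - m p) * (1 - a)) * F2
  have e2 : (1 - l1) * (w₂ - m p) * ((1 - a) * (1 - b)) = (p - a) * ((1 - b) * (w₂ - m p)) := by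
    linear_combination ((w₂ - m p) * (1 - b)) * F1
  have : (1 - l2) * (w₁ - m p) * ((1 - a) * (1 - b)) ≤ (1 - l1) * (w₂ - m p) * ((1 - a) * (1 - b)) := by
    rw [e1, e2]; exact P
  exact le_of_mul_le_mul_right this hpos
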